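/- Let p ≥ 5 be a prime. Then Σ_{m odd, 1 ≤ m ≤ p−2} H_m ≡ (H'_{p−1} + 1)/2 (mod p), where H'_{p−1} = 1 + 1/3 + 1/5 + ⋯ + 1/(p−2). -/

import Mathlib

/-- Harmonic number `H_n = ∑_{i=1}^n 1/i` (with `H_0 = 0`). -/
def H (n : ℕ) : ℚ := ∑ i ∈ Finset.range n, 1 / ((i : ℚ) + 1)
/-- Congruence of `p`-integral rationals modulo `p^k`: the `p`-adic valuation of
`x - y` is at least `k`, expressed via the `p`-adic norm. -/
def ratCongr (p k : ℕ) (x y : ℚ) : Prop :=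
  padicNorm p (x - y) ≤ (p : ℚ) ^ (-(k : ℤ))

lemma H_succ (n : ℕ) : H (n + 1) = H n + 1 / ((n : ℚ) + 1) :=
  Finset.sum_range_succ _ _

lemma key (k : ℕ) :
    ∑ m ∈ (Finset.Icc 1 (2*k+1)).filter (fun m => Odd m), H m
      = ((2*(k:ℚ)+2)/2) * H (2*k+1) - (2*(k:ℚ)+1)/2
        + (∑ i ∈ (Finset.Icc 1 (2*k+1)).filter (fun i => Odd i), 1/(i:ℚ))/2 := by
  induction k with
  | zero =>
      norm_num [Finset.Icc_self, Finset.filter_singleton, H, Finset.sum_range_succ]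
  | succ k ih =>
      simp only [show 2*(k+1)+1 = 2*k+3 from by ring]
      have hset : (Finset.Icc 1 (2*k+3)).filter (fun m => Odd m)
          = insert (2*k+3) ((Finset.Icc 1 (2*k+1)).filter (fun m => Odd m)) := by
        ext a
        simp only [Finset.mem_filter, Finset.mem_Icc, Finset.mem_insert, Nat.odd_iff]
        omega
      have hnm : (2*k+3) ∉ (Finset.Icc 1 (2*k+1)).filter (fun m => Odd m) := by
        simp only [Finset.mem_filter, Finset.mem_Icc]
        omega
      have h1 : H (2*k+3) = H (2*k+1) + 1/(2*(k:ℚ)+2) + 1/(2*(k:ℚ)+3) := by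
        rw [show 2*k+3 = (2*k+2)+1 from by ring, H_succ,
            show 2*k+2 = (2*k+1)+1 from by ring, H_succ]
        push_cast; ring
      rw [hset, Finset.sum_insert hnm, Finset.sum_insert hnm, ih, h1]
      set A := H (2*k+1) with hA
      set B := ∑ i ∈ (Finset.Icc 1 (2*k+1)).filter (fun i => Odd i), 1/(i:ℚ) with hBdef
      have h2 : (2*(k:ℚ)+2) ≠ 0 := by positivity
      have h3 : (2*(k:ℚ)+3) ≠ 0 := by positivity
      push_cast
      field_simp
      ring


-- reflection: H n as sum of 1/(n - i)
lemma H_reflect (n : ℕ) : H n = ∑ i ∈ Finset.range n, 1 / ((n : ℚ) - i) := by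
  rw [H, ← Finset.sum_range_reflect (fun i => 1 / ((i:ℚ)+1)) n]
  refine Finset.sum_congr rfl fun j hj => ?_
  have hj' : j < n := Finset.mem_range.mp hj
  have : ((n - 1 - j : ℕ) : ℚ) = (n : ℚ) - 1 - j := by
    have : (n - 1 - j : ℕ) = n - (1 + j) := by omega
    rw [this, Nat.cast_sub (by omega)]
    push_cast; ring
  rw [this]; ring_nf

-- pairing: H (2k+2) = (2k+3) * S
lemma H_pair (k : ℕ) :
    H (2*k+2) = (2*(k:ℚ)+3) *
      ∑ i ∈ Finset.range (2*k+2), 1 / (2*((i:ℚ)+1)*((2*(k:ℚ)+2) - i)) := by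
  have h2 : H (2*k+2) + H (2*k+2)
      = ∑ i ∈ Finset.range (2*k+2), (2*(k:ℚ)+3)/(((i:ℚ)+1)*((2*(k:ℚ)+2) - i)) := by
    nth_rewrite 2 [H_reflect]
    rw [H, ← Finset.sum_add_distrib]
    refine Finset.sum_congr rfl fun i hi => ?_
    have hi' : i < 2*k+2 := Finset.mem_range.mp hi
    have hne1 : ((i:ℚ)+1) ≠ 0 := by positivity
    have hne2 : ((2*k+2 : ℕ):ℚ) - i ≠ 0 := by
      have : (i:ℚ) < ((2*k+2 : ℕ):ℚ) := by exact_mod_cast hi'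
      linarith
    push_cast at hne2 ⊢
    field_simp
    ring_nf
    have hd : (2 - (i:ℚ) + (k:ℚ)*2) ≠ 0 := by intro h; apply hne2; linarith
    have e : (2 - (i:ℚ) + (k:ℚ)*2)⁻¹ * (2 - (i:ℚ) + (k:ℚ)*2) = 1 := inv_mul_cancel₀ hd
    linear_combination -e
  rw [Finset.mul_sum]
  have h3 : ∀ i ∈ Finset.range (2*k+2),
      (2*(k:ℚ)+3) * (1 / (2*((i:ℚ)+1)*((2*(k:ℚ)+2) - i)))
        = (1/2) * ((2*(k:ℚ)+3)/(((i:ℚ)+1)*((2*(k:ℚ)+2) - i))) := by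
    intro i hi
    have hi' : i < 2*k+2 := Finset.mem_range.mp hi
    have hne1 : ((i:ℚ)+1) ≠ 0 := by positivity
    have hne2 : (2*(k:ℚ)+2) - i ≠ 0 := by
      have : (i:ℚ) < 2*(k:ℚ)+2 := by exact_mod_cast hi'
      linarith
    field_simp
  rw [Finset.sum_congr rfl h3, ← Finset.mul_sum, ← h2]
  ring



/-ANCHOR-/
/-- The sum of harmonic numbers with odd indices is `(H'_{p−1} + 1)/2` mod `p`, where
`H'_{p−1}` is the sum of reciprocals of odd integers from `1` to `p−2`. -/
theorem sum_odd_harmonic_numbers (p : ℕ) (hp : p.Prime) (hp5 : 5 ≤ p) :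
    ratCongr p 1
      (∑ m ∈ (Finset.Icc 1 (p - 2)).filter (fun m => Odd m), H m)
      (((∑ i ∈ (Finset.Icc 1 (p - 2)).filter (fun i => Odd i), 1 / (i : ℚ)) + 1) / 2) := by
  haveI : Fact p.Prime := ⟨hp⟩
  have hodd : p % 2 = 1 := Nat.odd_iff.mp (hp.odd_of_ne_two (by omega))
  obtain ⟨k, hk⟩ : ∃ k, p = 2*k+3 := ⟨(p-3)/2, by omega⟩
  have hpm2 : p - 2 = 2*k+1 := by omega
  rw [ratCongr, hpm2]
  set S : ℚ := ∑ i ∈ Finset.range (2*k+2), 1 / (2*((i:ℚ)+1)*((2*(k:ℚ)+2) - i)) with hS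
  set B : ℚ := ∑ i ∈ (Finset.Icc 1 (2*k+1)).filter (fun i => Odd i), 1/(i:ℚ) with hB
  set t : ℚ := ((k:ℚ)+1) * (S - 1/(2*(k:ℚ)+2)) with ht
  -- the difference is p * t
  have hdiff : (∑ m ∈ (Finset.Icc 1 (2*k+1)).filter (fun m => Odd m), H m)
      - ((B + 1)/2) = (p:ℚ) * t := by
    rw [key k, ← hB]
    have h21 : H (2*k+1) = H (2*k+2) - 1/(2*(k:ℚ)+2) := by
      have e := H_succ (2*k+1)
      rw [show (2*k+1)+1 = 2*k+2 from by ring] at e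
      rw [e]; push_cast; ring
    rw [h21, H_pair k, ← hS, ht, hk]
    have h2 : (2*(k:ℚ)+2) ≠ 0 := by positivity
    push_cast
    field_simp
    ring
  rw [hdiff, padicNorm.mul, padicNorm.padicNorm_p (by omega)]
  -- bound padicNorm t ≤ 1
  have hterm : ∀ m : ℕ, m ≠ 0 → ¬ p ∣ m → padicNorm p (1/(m:ℚ)) = 1 := by
    intro m hm hdvd
    rw [padicNorm.div, padicNorm.one, (padicNorm.nat_eq_one_iff m).mpr hdvd, div_one]
  have hSle : padicNorm p S ≤ 1 := by
    refine padicNorm.sum_le' (fun i hi => ?_) one_pos.le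
    have hi' : i < 2*k+2 := Finset.mem_range.mp hi
    have hcast : (((2*(i+1)*(2*k+2-i) : ℕ)):ℚ) = 2*((i:ℚ)+1)*((2*(k:ℚ)+2) - i) := by
      push_cast [Nat.cast_sub (show i ≤ 2*k+2 by omega)]
      ring
    rw [← hcast]
    refine le_of_eq (hterm _ (by intro h0; rw [Nat.mul_eq_zero, Nat.mul_eq_zero] at h0; omega) ?_)
    intro hdvd
    rcases (Nat.Prime.dvd_mul hp).mp hdvd with h | h
    · rcases (Nat.Prime.dvd_mul hp).mp h with h' | h'
      · have := Nat.le_of_dvd (by omega) h'; omega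
      · have := Nat.le_of_dvd (by omega) h'; omega
    · have := Nat.le_of_dvd (by omega) h; omega
  have htle : padicNorm p t ≤ 1 := by
    rw [ht, padicNorm.mul]
    have h1 : padicNorm p ((k:ℚ)+1) ≤ 1 := by
      have : ((k:ℚ)+1) = ((k+1 : ℕ) : ℚ) := by push_cast; ring
      rw [this]
      exact padicNorm.of_nat _
    have h2 : padicNorm p (S - 1/(2*(k:ℚ)+2)) ≤ 1 := by
      refine padicNorm.sub.trans (max_le hSle ?_)
      have : (2*(k:ℚ)+2) = ((2*k+2 : ℕ) : ℚ) := by push_cast; ring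
      rw [this]
      refine le_of_eq (hterm _ (by omega) ?_)
      intro hdvd
      have := Nat.le_of_dvd (by omega) hdvd; omega
    calc padicNorm p ((k:ℚ)+1) * padicNorm p (S - 1/(2*(k:ℚ)+2))
        ≤ 1 * 1 := by
          exact mul_le_mul h1 h2 (padicNorm.nonneg _) zero_le_one
      _ = 1 := by ring
  have hp0 : (0:ℚ) ≤ (p:ℚ)⁻¹ := by positivity
  calc (p:ℚ)⁻¹ * padicNorm p t ≤ (p:ℚ)⁻¹ * 1 := by
        exact mul_le_mul_of_nonneg_left htle hp0
    _ = (p:ℚ) ^ (-(1:ℕ):ℤ) := by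
        rw [mul_one]
        simp [zpow_neg]
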